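/- Let p: ℝ^{d_x} → ℝ, q: ℝ^{d_y} → ℝ be convex differentiable, R: ℝ^{d_x}×ℝ^{d_y} → ℝ differentiable with R(·, y) convex and R(x, ·) concave, and let (x*, y*) be a saddle point of F(x,y) = p(x) + R(x,y) - q(y). Suppose (x̂, ŷ) is a saddle point of the regularized problem F_ε(x,y) = p(x) + (ε/(16 D_x²))‖x‖² + R(x,y) - q(y) - (ε/(16 D_y²))‖y‖², where ‖x*‖ ≤ D_x and ‖y*‖ ≤ D_y. If ‖x̂ - x̂*‖² + ‖ŷ - ŷ*‖² ≤ ε/2 where (x̂*, ŷ*) is the exact saddle point of F_ε, then the regularized saddle point (x̂*, ŷ*) satisfies (ε/(16 D_x²))‖x̂* - x*‖² + (ε/(16 D_y²))‖ŷ* - y*‖² ≤ (ε/(16 D_x²))‖x*‖² + (ε/(16 D_y²))‖y*‖² ≤ ε/8. -/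

import Mathlib

open RealInnerProductSpace


lemma strongmin_aux {E : Type*} [NormedAddCommGroup E] [InnerProductSpace ℝ E]
    (g : E → ℝ) (hg : ConvexOn ℝ Set.univ g) (a : ℝ) (ha : 0 ≤ a)
    (x0 : E) (hmin : ∀ x, g x0 + a * ‖x0‖ ^ 2 ≤ g x + a * ‖x‖ ^ 2) (x : E) :
    g x0 + a * ‖x0‖ ^ 2 + a * ‖x - x0‖ ^ 2 ≤ g x + a * ‖x‖ ^ 2 := by
  have key : ∀ t : ℝ, 0 < t → t ≤ 1 →
      a * (1 - t) * ‖x - x0‖ ^ 2 ≤ (g x + a * ‖x‖ ^ 2) - (g x0 + a * ‖x0‖ ^ 2) := by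
    intro t ht ht1
    set z := t • x + (1 - t) • x0 with hzdef
    have hgz : g z ≤ t * g x + (1 - t) * g x0 :=
      hg.2 (Set.mem_univ x) (Set.mem_univ x0) (le_of_lt ht) (by linarith) (by ring)
    have hip : ⟪x - x0, x - x0⟫ = ⟪x, x⟫ - 2 * ⟪x, x0⟫ + ⟪x0, x0⟫ := by
      simp only [inner_sub_left, inner_sub_right, real_inner_comm x x0]; ring
    have hipz : ⟪z, z⟫ = t ^ 2 * ⟪x, x⟫ + 2 * (t * (1 - t)) * ⟪x, x0⟫
        + (1 - t) ^ 2 * ⟪x0, x0⟫ := by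
      simp only [hzdef, inner_add_left, inner_add_right, real_inner_smul_left,
        real_inner_smul_right, real_inner_comm x x0]; ring
    have h1 : ‖z‖ ^ 2 = ⟪z, z⟫ := (real_inner_self_eq_norm_sq z).symm
    have h2 : ‖x‖ ^ 2 = ⟪x, x⟫ := (real_inner_self_eq_norm_sq x).symm
    have h3 : ‖x0‖ ^ 2 = ⟪x0, x0⟫ := (real_inner_self_eq_norm_sq x0).symm
    have h4 : ‖x - x0‖ ^ 2 = ⟪x - x0, x - x0⟫ := (real_inner_self_eq_norm_sq _).symm
    have hz2 : ‖z‖ ^ 2 = t * ‖x‖ ^ 2 + (1 - t) * ‖x0‖ ^ 2 - t * (1 - t) * ‖x - x0‖ ^ 2 := by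
      rw [h1, h2, h3, h4, hipz, hip]; ring
    have hmz := hmin z
    -- g x0 + a‖x0‖² ≤ g z + a‖z‖² ≤ t g x + (1-t) g x0 + a (t‖x‖² + (1-t)‖x0‖² - t(1-t)‖x-x0‖²)
    have hcomb : g x0 + a * ‖x0‖ ^ 2 ≤ t * g x + (1 - t) * g x0
        + a * (t * ‖x‖ ^ 2 + (1 - t) * ‖x0‖ ^ 2 - t * (1 - t) * ‖x - x0‖ ^ 2) := by
      calc g x0 + a * ‖x0‖ ^ 2 ≤ g z + a * ‖z‖ ^ 2 := hmz
        _ ≤ _ := by rw [hz2]; linarith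
    have htpos : (0:ℝ) < t := ht
    nlinarith [mul_pos htpos htpos]
  -- take the limit t → 0
  rw [add_assoc]
  have : a * ‖x - x0‖ ^ 2 ≤ (g x + a * ‖x‖ ^ 2) - (g x0 + a * ‖x0‖ ^ 2) := by
    apply le_of_forall_pos_le_add
    intro δ hδ
    by_cases hc : a * ‖x - x0‖ ^ 2 = 0
    · have := key 1 one_pos le_rfl
      rw [hc]; nlinarith
    · have hcpos : 0 < a * ‖x - x0‖ ^ 2 :=
        lt_of_le_of_ne (mul_nonneg ha (sq_nonneg _)) (Ne.symm hc)
      set t := min 1 (δ / (a * ‖x - x0‖ ^ 2)) with htdef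
      have ht0 : 0 < t := lt_min one_pos (div_pos hδ hcpos)
      have ht1 : t ≤ 1 := min_le_left _ _
      have h := key t ht0 ht1
      have ht2 : t * (a * ‖x - x0‖ ^ 2) ≤ δ := by
        have : t ≤ δ / (a * ‖x - x0‖ ^ 2) := min_le_right _ _
        calc t * (a * ‖x - x0‖ ^ 2) ≤ δ / (a * ‖x - x0‖ ^ 2) * (a * ‖x - x0‖ ^ 2) :=
              mul_le_mul_of_nonneg_right this (le_of_lt hcpos)
          _ = δ := div_mul_cancel₀ _ hc
      nlinarith
  linarith

/-- Regularization lemma for convex-concave saddle point problems: the saddle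
point `(xrs, yrs)` of the regularized objective `F_ε` stays close to the saddle
point `(xs, ys)` of `F(x,y) = p x + R x y - q y`:
`(ε/(16Dx²))‖xrs - xs‖² + (ε/(16Dy²))‖yrs - ys‖² ≤ (ε/(16Dx²))‖xs‖² + (ε/(16Dy²))‖ys‖² ≤ ε/8`. -/
theorem stmt8 {dx dy : ℕ}
    (p : EuclideanSpace ℝ (Fin dx) → ℝ) (q : EuclideanSpace ℝ (Fin dy) → ℝ)
    (R : EuclideanSpace ℝ (Fin dx) → EuclideanSpace ℝ (Fin dy) → ℝ)
    (hp : Differentiable ℝ p) (hq : Differentiable ℝ q)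
    (hpconv : ConvexOn ℝ Set.univ p) (hqconv : ConvexOn ℝ Set.univ q)
    (hRdiff : Differentiable ℝ (fun z : EuclideanSpace ℝ (Fin dx) × EuclideanSpace ℝ (Fin dy) => R z.1 z.2))
    (hRx : ∀ y, ConvexOn ℝ Set.univ (fun x => R x y))
    (hRy : ∀ x, ConcaveOn ℝ Set.univ (fun y => R x y))
    (F : EuclideanSpace ℝ (Fin dx) → EuclideanSpace ℝ (Fin dy) → ℝ)
    (hF : ∀ x y, F x y = p x + R x y - q y)
    (ε Dx Dy : ℝ) (hε : 0 < ε) (hDx : 0 < Dx) (hDy : 0 < Dy)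
    (Fe : EuclideanSpace ℝ (Fin dx) → EuclideanSpace ℝ (Fin dy) → ℝ)
    (hFe : ∀ x y, Fe x y =
      p x + ε / (16 * Dx ^ 2) * ‖x‖ ^ 2 + R x y - q y - ε / (16 * Dy ^ 2) * ‖y‖ ^ 2)
    (xs : EuclideanSpace ℝ (Fin dx)) (ys : EuclideanSpace ℝ (Fin dy))
    (hsaddle : ∀ x y, F xs y ≤ F xs ys ∧ F xs ys ≤ F x ys)
    (hxs : ‖xs‖ ≤ Dx) (hys : ‖ys‖ ≤ Dy)
    (xrs : EuclideanSpace ℝ (Fin dx)) (yrs : EuclideanSpace ℝ (Fin dy))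
    (hrsaddle : ∀ x y, Fe xrs y ≤ Fe xrs yrs ∧ Fe xrs yrs ≤ Fe x yrs)
    (xh : EuclideanSpace ℝ (Fin dx)) (yh : EuclideanSpace ℝ (Fin dy))
    (hclose : ‖xh - xrs‖ ^ 2 + ‖yh - yrs‖ ^ 2 ≤ ε / 2) :
    ε / (16 * Dx ^ 2) * ‖xrs - xs‖ ^ 2 + ε / (16 * Dy ^ 2) * ‖yrs - ys‖ ^ 2 ≤
      ε / (16 * Dx ^ 2) * ‖xs‖ ^ 2 + ε / (16 * Dy ^ 2) * ‖ys‖ ^ 2 ∧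
    ε / (16 * Dx ^ 2) * ‖xs‖ ^ 2 + ε / (16 * Dy ^ 2) * ‖ys‖ ^ 2 ≤ ε / 8 := by

  set a := ε / (16 * Dx ^ 2) with hadef
  set b := ε / (16 * Dy ^ 2) with hbdef
  have ha : 0 < a := div_pos hε (by positivity)
  have hb : 0 < b := div_pos hε (by positivity)
  -- x-side: xrs minimizes x ↦ p x + R x yrs + a‖x‖²
  have hg1 : ConvexOn ℝ Set.univ (fun x => p x + R x yrs) := hpconv.add (hRx yrs)
  have hmin1 : ∀ x, (fun x => p x + R x yrs) xrs + a * ‖xrs‖ ^ 2 ≤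
      (fun x => p x + R x yrs) x + a * ‖x‖ ^ 2 := by
    intro x
    have h := (hrsaddle x yrs).2
    rw [hFe, hFe] at h
    simp only []
    linarith
  have hx := strongmin_aux _ hg1 a (le_of_lt ha) xrs hmin1 xs
  -- y-side: yrs minimizes y ↦ q y - R xrs y + b‖y‖²
  have hg2 : ConvexOn ℝ Set.univ (fun y => q y - R xrs y) :=
    hqconv.sub (hRy xrs)
  have hmin2 : ∀ y, (fun y => q y - R xrs y) yrs + b * ‖yrs‖ ^ 2 ≤
      (fun y => q y - R xrs y) y + b * ‖y‖ ^ 2 := by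
    intro y
    have h := (hrsaddle xrs y).1
    rw [hFe, hFe] at h
    simp only []
    linarith
  have hy := strongmin_aux _ hg2 b (le_of_lt hb) yrs hmin2 ys
  -- saddle point facts for F
  have hs1 : F xs yrs ≤ F xs ys := (hsaddle xs yrs).1
  have hs2 : F xs ys ≤ F xrs ys := (hsaddle xrs ys).2
  rw [hF, hF] at hs1
  rw [hF, hF] at hs2
  have hrev1 : ‖xrs - xs‖ = ‖xs - xrs‖ := norm_sub_rev _ _
  have hrev2 : ‖yrs - ys‖ = ‖ys - yrs‖ := norm_sub_rev _ _
  constructor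
  · rw [hrev1, hrev2]
    nlinarith [mul_nonneg (le_of_lt ha) (sq_nonneg ‖xrs‖),
      mul_nonneg (le_of_lt hb) (sq_nonneg ‖yrs‖)]
  · have h1 : a * ‖xs‖ ^ 2 ≤ ε / 16 := by
      have hxs2 : ‖xs‖ ^ 2 ≤ Dx ^ 2 := by nlinarith [norm_nonneg xs]
      have : a * ‖xs‖ ^ 2 ≤ a * Dx ^ 2 :=
        mul_le_mul_of_nonneg_left hxs2 (le_of_lt ha)
      have heq : a * Dx ^ 2 = ε / 16 := by
        rw [hadef]; field_simp
      linarith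
    have h2 : b * ‖ys‖ ^ 2 ≤ ε / 16 := by
      have hys2 : ‖ys‖ ^ 2 ≤ Dy ^ 2 := by nlinarith [norm_nonneg ys]
      have : b * ‖ys‖ ^ 2 ≤ b * Dy ^ 2 :=
        mul_le_mul_of_nonneg_left hys2 (le_of_lt hb)
      have heq : b * Dy ^ 2 = ε / 16 := by
        rw [hbdef]; field_simp
      linarith
    linarith
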